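/- Let Π₀ be a 2×2 real positive definite matrix, W > 0, and z₀, …, z_{T−1} ∈ ℝ², and define recursively Π_{t+1} := Φ(Π_t, z_t). Then det(Π_T) = det(Π₀) · Π_{t=0}^{T−1} W/(W + z_tᵀ Π_t z_t); equivalently, the accumulated information utility satisfies L_T := (1/2)·log det(Π₀) − (1/2)·log det(Π_T) = Σ_{t=0}^{T−1} (1/2)·log(1 + (z_tᵀ Π_t z_t)/W). -/

import Mathlib

open Matrix

/-- The LSE covariance update map Φ(Π, z) = Π − (Π z zᵀ Π)/(W + zᵀ Π z). -/
noncomputable def covUpdate (W : ℝ) (Pm : Matrix (Fin 2) (Fin 2) ℝ) (z : Fin 2 → ℝ) :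
    Matrix (Fin 2) (Fin 2) ℝ :=
  Pm - (W + z ⬝ᵥ Pm.mulVec z)⁻¹ • (Pm * vecMulVec z z * Pm)

lemma covUpdate_det (W : ℝ) (Pm : Matrix (Fin 2) (Fin 2) ℝ) (z : Fin 2 → ℝ)
    (hc : W + z ⬝ᵥ Pm.mulVec z ≠ 0) :
    (covUpdate W Pm z).det = Pm.det * (W / (W + z ⬝ᵥ Pm.mulVec z)) := by
  simp only [covUpdate, Matrix.det_fin_two, Matrix.sub_apply, Matrix.smul_apply,
    Matrix.mul_apply, vecMulVec_apply, mulVec, dotProduct, Fin.sum_univ_two, smul_eq_mul] at *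
  linear_combination (-(Pm 0 0 * Pm 1 1 - Pm 0 1 * Pm 1 0)) * mul_inv_cancel₀ hc

lemma ZPZ (Pm : Matrix (Fin 2) (Fin 2) ℝ) (z : Fin 2 → ℝ) :
    vecMulVec z z * Pm * vecMulVec z z = (z ⬝ᵥ Pm.mulVec z) • vecMulVec z z := by
  ext i j
  simp [Matrix.mul_apply, vecMulVec_apply, mulVec, dotProduct, Fin.sum_univ_two]
  ring

lemma vecMulVec_posSemidef (z : Fin 2 → ℝ) : (vecMulVec z z).PosSemidef := by
  refine Matrix.PosSemidef.of_dotProduct_mulVec_nonneg ?_ ?_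
  · ext i j
    simp [vecMulVec, Matrix.conjTranspose_apply, mul_comm]
  · intro x
    have : star x ⬝ᵥ (vecMulVec z z).mulVec x = (z ⬝ᵥ x) * (z ⬝ᵥ x) := by
      simp [vecMulVec, mulVec, dotProduct, Fin.sum_univ_two]; ring
    rw [this]; exact mul_self_nonneg _

lemma smul_vecMulVec_posSemidef {c : ℝ} (hc : 0 ≤ c) (z : Fin 2 → ℝ) :
    (c • vecMulVec z z).PosSemidef := by
  refine Matrix.PosSemidef.of_dotProduct_mulVec_nonneg ?_ ?_
  · ext i j
    simp [vecMulVec, Matrix.conjTranspose_apply, mul_comm]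
  · intro x
    have : star x ⬝ᵥ (c • vecMulVec z z).mulVec x = c * ((z ⬝ᵥ x) * (z ⬝ᵥ x)) := by
      simp [vecMulVec, mulVec, dotProduct, Fin.sum_univ_two]; ring
    rw [this]
    exact mul_nonneg hc (mul_self_nonneg _)

lemma quad_nonneg {Pm : Matrix (Fin 2) (Fin 2) ℝ} (hP : Pm.PosDef) (z : Fin 2 → ℝ) :
    0 ≤ z ⬝ᵥ Pm.mulVec z := by
  have := hP.posSemidef.dotProduct_mulVec_nonneg z
  simpa using this

lemma covUpdate_posDef {Pm : Matrix (Fin 2) (Fin 2) ℝ} (hP : Pm.PosDef)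
    {W : ℝ} (hW : 0 < W) (z : Fin 2 → ℝ) : (covUpdate W Pm z).PosDef := by
  set q := z ⬝ᵥ Pm.mulVec z with hq
  have hq0 : 0 ≤ q := quad_nonneg hP z
  have hc : 0 < W + q := by linarith
  set Z := vecMulVec z z with hZ
  have hA : (Pm⁻¹ + W⁻¹ • Z).PosDef :=
    hP.inv.add_posSemidef (smul_vecMulVec_posSemidef (by positivity : (0:ℝ) ≤ W⁻¹) z)
  have hinv : Pm⁻¹ * Pm = 1 := Matrix.nonsing_inv_mul _ hP.det_pos.ne'.isUnit
  have hZPZ : Z * Pm * Z = q • Z := by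
    ext i j
    simp [hZ, hq, Matrix.mul_apply, vecMulVec_apply, mulVec, dotProduct, Fin.sum_univ_two]
    ring
  have key : (Pm⁻¹ + W⁻¹ • Z) * covUpdate W Pm z = 1 := by
    have expand : (Pm⁻¹ + W⁻¹ • Z) * covUpdate W Pm z
        = 1 + (W⁻¹ - (W + q)⁻¹ - W⁻¹ * (W + q)⁻¹ * q) • (Z * Pm) := by
      simp only [covUpdate, ← hq, ← hZ, mul_sub, add_mul, Matrix.mul_smul, Matrix.smul_mul,
        ← mul_assoc, hinv, one_mul, smul_smul]
      have h1 : Pm⁻¹ * Pm * Z = Z := by rw [hinv, one_mul]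
      have h2 : W⁻¹ • Z * Pm * Z * Pm = (W⁻¹ * q) • (Z * Pm) := by
        calc W⁻¹ • Z * Pm * Z * Pm = W⁻¹ • (Z * Pm * Z * Pm) := by
              simp [Matrix.smul_mul, mul_assoc]
          _ = W⁻¹ • ((q • Z) * Pm) := by rw [hZPZ]
          _ = (W⁻¹ * q) • (Z * Pm) := by simp [Matrix.smul_mul, smul_smul]
      have h3 : Z * Pm * Z * Pm = q • (Z * Pm) := by
        rw [hZPZ, Matrix.smul_mul]
      rw [h3, smul_smul]
      module
    rw [expand]
    have : (W⁻¹ - (W + q)⁻¹ - W⁻¹ * (W + q)⁻¹ * q) = 0 := by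
      field_simp
      ring
    rw [this, zero_smul, add_zero]
  have : (Pm⁻¹ + W⁻¹ • Z)⁻¹ = covUpdate W Pm z := Matrix.inv_eq_right_inv key
  rw [← this]
  exact hA.inv

/-- det Π_T = det Π₀ · ∏_{t<T} W/(W + z_tᵀ Π_t z_t); equivalently the accumulated
information utility L_T = (1/2)·log det Π₀ − (1/2)·log det Π_T equals
Σ_{t<T} (1/2)·log(1 + z_tᵀ Π_t z_t / W). -/
theorem covUpdate_accumulated_utility
    (Pm0 : Matrix (Fin 2) (Fin 2) ℝ) (hPm0 : Pm0.PosDef)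
    (W : ℝ) (hW : 0 < W) (T : ℕ) (z : ℕ → Fin 2 → ℝ)
    (Pi : ℕ → Matrix (Fin 2) (Fin 2) ℝ)
    (hPi0 : Pi 0 = Pm0)
    (hrec : ∀ t, Pi (t + 1) = covUpdate W (Pi t) (z t)) :
    (Pi T).det = Pm0.det * ∏ t ∈ Finset.range T, W / (W + z t ⬝ᵥ (Pi t).mulVec (z t)) ∧
      (1 / 2) * Real.log Pm0.det - (1 / 2) * Real.log (Pi T).det
        = ∑ t ∈ Finset.range T, (1 / 2) * Real.log (1 + (z t ⬝ᵥ (Pi t).mulVec (z t)) / W) := by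
  have hpd : ∀ t, (Pi t).PosDef := by
    intro t
    induction t with
    | zero => rw [hPi0]; exact hPm0
    | succ n ih => rw [hrec]; exact covUpdate_posDef ih hW _
  have hcpos : ∀ t, 0 < W + z t ⬝ᵥ (Pi t).mulVec (z t) := by
    intro t
    have := quad_nonneg (hpd t) (z t)
    linarith
  have hdet : ∀ T, (Pi T).det
      = Pm0.det * ∏ t ∈ Finset.range T, W / (W + z t ⬝ᵥ (Pi t).mulVec (z t)) := by
    intro T
    induction T with
    | zero => simp [hPi0]
    | succ n ih =>
      rw [hrec, covUpdate_det _ _ _ (hcpos n).ne', ih, Finset.prod_range_succ]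
      ring
  refine ⟨hdet T, ?_⟩
  have hfac : ∀ t, W / (W + z t ⬝ᵥ (Pi t).mulVec (z t)) ≠ 0 := fun t =>
    (div_pos hW (hcpos t)).ne'
  have hlog : Real.log (Pi T).det = Real.log Pm0.det
      + ∑ t ∈ Finset.range T, Real.log (W / (W + z t ⬝ᵥ (Pi t).mulVec (z t))) := by
    rw [hdet T, Real.log_mul hPm0.det_pos.ne'
      (Finset.prod_ne_zero_iff.2 fun t _ => hfac t), Real.log_prod fun t _ => hfac t]
  have hterm : ∀ t, Real.log (W / (W + z t ⬝ᵥ (Pi t).mulVec (z t)))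
      = - Real.log (1 + (z t ⬝ᵥ (Pi t).mulVec (z t)) / W) := by
    intro t
    rw [← Real.log_inv]
    congr 1
    rw [eq_comm, inv_eq_iff_eq_inv, inv_div, eq_div_iff hW.ne']
    field_simp
  rw [hlog]
  simp only [hterm]
  rw [Finset.sum_neg_distrib]
  rw [← Finset.mul_sum]
  ring
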